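/- Let $\theta$ and $\omega$ be the constant-coefficient $(1,1)$-forms $\theta=\pi^*(dd^c|z|^2)$ and $\omega=dd^c(|z|^2+|w|^2)$ on $\mathbb{C}^n\times\mathbb{C}$, and fix $1\le m\le n$. If $\beta$ is a constant-coefficient real $(1,1)$-form on $\mathbb{C}^{n+1}$ satisfying $\beta\wedge\alpha_1\wedge\cdots\wedge\alpha_m\wedge\theta^{n-m}\ge 0$ for all $(\theta,m+1)$-positive $(1,1)$-forms $\alpha_1,\ldots,\alpha_m$, then $\beta$ is itself $(\theta,m+1)$-positive. -/

import Mathlib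

noncomputable section

/-- The mixed determinant of `N` matrices of size `N`: up to a positive
normalizing constant, the coefficient of `α₁ ∧ ⋯ ∧ α_N` against the Euclidean
volume form, when each Hermitian matrix `A i` represents a constant-coefficient
real `(1,1)`-form. -/
def mixedDet {N : ℕ} (A : Fin N → Matrix (Fin N) (Fin N) ℂ) : ℂ :=
  (N.factorial : ℂ)⁻¹ * ∑ σ : Equiv.Perm (Fin N), (Matrix.of fun i j => A (σ j) i j).det

/-- The Hermitian matrix of the form `θ = π^*(dd^c|z|²)` on `ℂⁿ × ℂ`
(up to a positive constant): the identity in the `z`-directions, `0` in the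
`w`-direction. -/
def thetaMat (n : ℕ) : Matrix (Fin (n+1)) (Fin (n+1)) ℂ :=
  Matrix.diagonal (fun i => if (i : ℕ) < n then 1 else 0)

/-- `α` is a `(θ, m+1)`-positive `(1,1)`-form on `ℂⁿ × ℂ`:
`α^k ∧ ω^{m+1-k} ∧ θ^{n-m} ≥ 0` for all `1 ≤ k ≤ m+1`, where `ω = dd^c(|z|²+|w|²)`
corresponds to the identity matrix. -/
def ThetaPos (n m : ℕ) (α : Matrix (Fin (n+1)) (Fin (n+1)) ℂ) : Prop :=
  ∀ k : ℕ, 1 ≤ k → k ≤ m + 1 →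
    0 ≤ (mixedDet (fun i : Fin (n+1) =>
      if (i : ℕ) < k then α else if (i : ℕ) < m + 1 then (1 : Matrix _ _ ℂ) else thetaMat n)).re

/-! ### Auxiliary lemmas -/

lemma mixedDet_comp_perm {N : ℕ} (A : Fin N → Matrix (Fin N) (Fin N) ℂ)
    (e : Equiv.Perm (Fin N)) : mixedDet (A ∘ e) = mixedDet A := by
  unfold mixedDet
  congr 1
  rw [← Equiv.sum_comp (Equiv.mulLeft e) (fun σ : Equiv.Perm (Fin N) =>
    (Matrix.of fun i j => A (σ j) i j).det)]
  rfl

lemma col_eq {N : ℕ} (A : Fin N → Matrix (Fin N) (Fin N) ℂ) (p : Fin N)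
    (σ : Equiv.Perm (Fin N)) (Z X : Matrix (Fin N) (Fin N) ℂ) :
    (Matrix.of fun i j => (Function.update A p Z) (σ j) i j) =
      Matrix.updateCol (Matrix.of fun i j => (Function.update A p X) (σ j) i j)
        (σ⁻¹ p) (fun i => Z i (σ⁻¹ p)) := by
  ext i j
  by_cases hj : j = σ⁻¹ p
  · subst hj
    simp [Matrix.updateCol_apply, Function.update_apply]
  · have : σ j ≠ p := fun hc => hj (by simp [← hc])
    simp [Matrix.updateCol_apply, hj, Function.update_apply, this]
    exact fun hc => absurd hc hj

lemma mixedDet_update_add {N : ℕ} (A : Fin N → Matrix (Fin N) (Fin N) ℂ)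
    (p : Fin N) (X Y : Matrix (Fin N) (Fin N) ℂ) :
    mixedDet (Function.update A p (X + Y)) =
      mixedDet (Function.update A p X) + mixedDet (Function.update A p Y) := by
  unfold mixedDet
  rw [← mul_add, ← Finset.sum_add_distrib]
  congr 1
  apply Finset.sum_congr rfl
  intro σ _
  rw [col_eq A p σ (X + Y) X,
    show (fun i => (X + Y) i (σ⁻¹ p)) = (fun i => X i (σ⁻¹ p)) + (fun i => Y i (σ⁻¹ p)) from rfl,
    Matrix.det_updateCol_add, col_eq A p σ Y X]
  have hcol : (fun i => X i (σ⁻¹ p)) =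
      (fun i => (Matrix.of fun i j => (Function.update A p X) (σ j) i j) i (σ⁻¹ p)) := by
    funext i
    simp [Function.update_apply]
  rw [hcol, Matrix.updateCol_eq_self]

lemma mixedDet_update_smul {N : ℕ} (A : Fin N → Matrix (Fin N) (Fin N) ℂ)
    (p : Fin N) (c : ℂ) (X : Matrix (Fin N) (Fin N) ℂ) :
    mixedDet (Function.update A p (c • X)) = c * mixedDet (Function.update A p X) := by
  unfold mixedDet
  rw [Finset.mul_sum, Finset.mul_sum, Finset.mul_sum]
  apply Finset.sum_congr rfl
  intro σ _
  rw [col_eq A p σ (c • X) X,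
    show (fun i => (c • X) i (σ⁻¹ p)) = c • (fun i => X i (σ⁻¹ p)) from rfl,
    Matrix.det_updateCol_smul,
    show (fun i => X i (σ⁻¹ p)) =
      (fun i => (Matrix.of fun i j => (Function.update A p X) (σ j) i j) i (σ⁻¹ p)) from ?_,
    Matrix.updateCol_eq_self]
  · ring
  · funext i
    simp [Function.update_apply]

/-- cycle sending `p ↦ p+l`, and shifting `(p, p+l]` down by one; fixes the rest. -/
def shiftPerm (N p l : ℕ) (h : p + l < N) : Equiv.Perm (Fin N) where
  toFun i := ⟨if (i : ℕ) = p then p + l else if p < (i : ℕ) ∧ (i : ℕ) ≤ p + l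
      then (i : ℕ) - 1 else i, by split_ifs <;> omega⟩
  invFun i := ⟨if (i : ℕ) = p + l then p else if p ≤ (i : ℕ) ∧ (i : ℕ) < p + l
      then (i : ℕ) + 1 else i, by split_ifs <;> omega⟩
  left_inv i := by ext; simp only; split_ifs <;> omega
  right_inv i := by ext; simp only; split_ifs <;> omega

lemma shiftPerm_apply {N p l : ℕ} (h : p + l < N) (i : Fin N) :
    ((shiftPerm N p l h i : Fin N) : ℕ) =
      if (i : ℕ) = p then p + l else if p < (i : ℕ) ∧ (i : ℕ) ≤ p + l
      then (i : ℕ) - 1 else i := rfl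

/-- arrangement: `a` copies of `β`, then `b` copies of `β + t·1`, then `1`s up
to slot `m`, then `θ`s. -/
def arr (n m : ℕ) (β : Matrix (Fin (n+1)) (Fin (n+1)) ℂ) (a b : ℕ) (t : ℝ) :
    Fin (n+1) → Matrix (Fin (n+1)) (Fin (n+1)) ℂ := fun i =>
  if (i : ℕ) < a then β else if (i : ℕ) < a + b then β + (t : ℂ) • 1
  else if (i : ℕ) < m + 1 then 1 else thetaMat n

/-- The real coefficient of the arrangement. -/
def phiK (n m : ℕ) (β : Matrix (Fin (n+1)) (Fin (n+1)) ℂ) (a b : ℕ) (t : ℝ) : ℝ :=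
  (mixedDet (arr n m β a b t)).re

lemma arr_rec (n m : ℕ) (β : Matrix (Fin (n+1)) (Fin (n+1)) ℂ) (a b : ℕ) (t : ℝ)
    (hab : a + b ≤ m) (hmn : m ≤ n) :
    mixedDet (arr n m β a (b+1) t) =
      mixedDet (arr n m β (a+1) b t) + (t : ℂ) * mixedDet (arr n m β a b t) := by
  set p : Fin (n+1) := ⟨a, by omega⟩ with hp
  have h1 : arr n m β a (b+1) t = Function.update (arr n m β a (b+1) t) p (β + (t:ℂ) • 1) := by
    funext i
    rw [Function.update_apply]
    split_ifs with hip
    · subst hip; simp only [arr, hp]; split_ifs <;> first | rfl | omega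
    · rfl
  rw [h1, mixedDet_update_add, mixedDet_update_smul]
  have h2 : Function.update (arr n m β a (b+1) t) p β = arr n m β (a+1) b t := by
    funext i
    rw [Function.update_apply]
    simp only [arr, Fin.ext_iff, hp]
    split_ifs <;> first | rfl | omega
  have h3 : Function.update (arr n m β a (b+1) t) p 1 =
      (arr n m β a b t) ∘ (shiftPerm (n+1) a b (by omega)) := by
    funext i
    rw [Function.update_apply]
    simp only [arr, Function.comp_apply, Fin.ext_iff, hp, shiftPerm_apply]
    split_ifs <;> first | rfl | omega
  rw [h2, h3, mixedDet_comp_perm]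

lemma phiK_rec (n m : ℕ) (β : Matrix (Fin (n+1)) (Fin (n+1)) ℂ) (a b : ℕ) (t : ℝ)
    (hab : a + b ≤ m) (hmn : m ≤ n) :
    phiK n m β a (b+1) t = phiK n m β (a+1) b t + t * phiK n m β a b t := by
  unfold phiK
  rw [arr_rec n m β a b t hab hmn, Complex.add_re, Complex.re_ofReal_mul]

lemma arr_b0 (n m : ℕ) (β : Matrix (Fin (n+1)) (Fin (n+1)) ℂ) (a : ℕ) (t : ℝ) :
    arr n m β a 0 t = arr n m β a 0 0 := by
  funext i
  simp only [arr]
  split_ifs <;> first | rfl | omega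

lemma arr_00 (n m : ℕ) (β : Matrix (Fin (n+1)) (Fin (n+1)) ℂ) (t : ℝ) :
    arr n m β 0 0 t = fun i : Fin (n+1) =>
      if (i : ℕ) < m + 1 then (1 : Matrix (Fin (n+1)) (Fin (n+1)) ℂ) else thetaMat n := by
  funext i
  simp only [arr]
  split_ifs <;> first | rfl | omega

lemma base_pos (n m : ℕ) (hm1 : 1 ≤ m) (hmn : m ≤ n) :
    0 < (mixedDet (fun i : Fin (n+1) =>
      if (i : ℕ) < m + 1 then (1 : Matrix (Fin (n+1)) (Fin (n+1)) ℂ) else thetaMat n)).re := by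
  set N := n + 1 with hN
  set A : Fin N → Matrix (Fin N) (Fin N) ℂ := fun i =>
    if (i : ℕ) < m + 1 then (1 : Matrix (Fin N) (Fin N) ℂ) else thetaMat n with hA
  set dv : Fin N → Fin N → ℂ := fun q i =>
    if (q : ℕ) < m + 1 then 1 else if (i : ℕ) < n then 1 else 0 with hdv
  have hn1 : 1 ≤ n := le_trans hm1 hmn
  have hdiag : ∀ σ : Equiv.Perm (Fin N),
      (Matrix.of fun i j => A (σ j) i j) = Matrix.diagonal (fun i => dv (σ i) i) := by
    intro σ
    ext i j
    by_cases hij : i = j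
    · subst hij
      simp only [Matrix.of_apply, Matrix.diagonal_apply_eq, hA, hdv]
      split_ifs with h1 h2
      · exact Matrix.one_apply_eq _
      · simp [thetaMat, Matrix.diagonal_apply_eq, h2]
      · simp [thetaMat, Matrix.diagonal_apply_eq, h2]
    · simp only [Matrix.of_apply, Matrix.diagonal_apply_ne _ hij, hA]
      split_ifs with h1
      · exact Matrix.one_apply_ne hij
      · simp [thetaMat, Matrix.diagonal_apply_ne _ hij]
  have hdet : ∀ σ : Equiv.Perm (Fin N),
      (Matrix.of fun i j => A (σ j) i j).det = ∏ i, dv (σ i) i := by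
    intro σ; rw [hdiag σ, Matrix.det_diagonal]
  have h01 : ∀ σ : Equiv.Perm (Fin N), (∏ i, dv (σ i) i) = 0 ∨ (∏ i, dv (σ i) i) = 1 := by
    intro σ
    refine Finset.prod_induction _ (fun z => z = 0 ∨ z = 1) ?_ (Or.inr rfl) ?_
    · rintro x y (rfl | rfl) (rfl | rfl) <;> simp
    · intro i _
      simp only [hdv]
      split_ifs <;> simp
  have hnonneg : ∀ σ : Equiv.Perm (Fin N),
      0 ≤ ((Matrix.of fun i j => A (σ j) i j).det).re := by
    intro σ
    rw [hdet]
    rcases h01 σ with h | h <;> rw [h] <;> simp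
  set σ₀ : Equiv.Perm (Fin N) := Equiv.swap ⟨0, by omega⟩ ⟨n, by omega⟩ with hσ₀
  have hwit : ((Matrix.of fun i j => A (σ₀ j) i j).det).re = 1 := by
    rw [hdet]
    have hone : (∏ i, dv (σ₀ i) i) = 1 := by
      apply Finset.prod_eq_one
      intro i _
      by_cases h0 : i = (⟨0, by omega⟩ : Fin N)
      · subst h0
        rw [hσ₀, Equiv.swap_apply_left]
        simp only [hdv]
        split_ifs <;> first | rfl | (exfalso; omega)
      · by_cases hni : i = (⟨n, by omega⟩ : Fin N)
        · subst hni
          rw [hσ₀, Equiv.swap_apply_right]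
          simp only [hdv]
          split_ifs <;> first | rfl | (exfalso; omega)
        · rw [hσ₀, Equiv.swap_apply_of_ne_of_ne h0 hni]
          have hin : (i : ℕ) ≠ n := fun hc => hni (Fin.ext hc)
          simp only [hdv]
          split_ifs <;> first | rfl | (exfalso; omega)
    rw [hone]
    simp
  have hsum : 0 < (∑ σ : Equiv.Perm (Fin N), (Matrix.of fun i j => A (σ j) i j).det).re := by
    rw [Complex.re_sum]
    apply Finset.sum_pos' (fun σ _ => hnonneg σ)
    exact ⟨σ₀, Finset.mem_univ _, by rw [hwit]; norm_num⟩
  unfold mixedDet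
  have hfac : ((N.factorial : ℂ))⁻¹ = ((((N.factorial : ℝ))⁻¹ : ℝ) : ℂ) := by
    push_cast; ring
  rw [hfac, Complex.re_ofReal_mul]
  have hpos : (0:ℝ) < ((N.factorial : ℝ))⁻¹ := by positivity
  exact mul_pos hpos hsum

lemma phiK_cont (n m : ℕ) (β : Matrix (Fin (n+1)) (Fin (n+1)) ℂ) (a b : ℕ) :
    Continuous fun t : ℝ => phiK n m β a b t := by
  unfold phiK mixedDet
  refine Complex.continuous_re.comp (continuous_const.mul (continuous_finset_sum _
    fun σ _ => Continuous.matrix_det ?_))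
  apply continuous_matrix
  intro i j
  simp only [Matrix.of_apply, arr]
  by_cases h1 : ((σ j : Fin (n+1)) : ℕ) < a
  · simp only [if_pos h1]; exact continuous_const
  · simp only [if_neg h1]
    by_cases h2 : ((σ j : Fin (n+1)) : ℕ) < a + b
    · simp only [if_pos h2, Matrix.add_apply, Matrix.smul_apply, smul_eq_mul]
      exact continuous_const.add (Complex.continuous_ofReal.mul continuous_const)
    · simp only [if_neg h2]; exact continuous_const

lemma phiK_grow (n m : ℕ) (β : Matrix (Fin (n+1)) (Fin (n+1)) ℂ) (hmn : m ≤ n) :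
    ∀ b a, a + b ≤ m + 1 →
      ∃ C, 0 ≤ C ∧ ∀ t : ℝ, 1 ≤ t →
        t * |phiK n m β a b t - t ^ b * phiK n m β a 0 0| ≤ C * t ^ b := by
  intro b
  induction b with
  | zero =>
    intro a _
    refine ⟨0, le_refl 0, fun t _ => ?_⟩
    have h0 : phiK n m β a 0 t = phiK n m β a 0 0 := by
      unfold phiK; rw [arr_b0]
    rw [h0, pow_zero, one_mul, sub_self, abs_zero, mul_zero, zero_mul]
  | succ b ih =>
    intro a ha
    obtain ⟨C₁, hC₁0, hC₁⟩ := ih (a+1) (by omega)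
    obtain ⟨C₂, hC₂0, hC₂⟩ := ih a (by omega)
    set d0 := phiK n m β a 0 0 with hd0
    set d1 := phiK n m β (a+1) 0 0 with hd1
    refine ⟨C₁ + |d1| + C₂, by positivity, fun t ht => ?_⟩
    have ht0 : (0:ℝ) < t := lt_of_lt_of_le one_pos ht
    have hrec : phiK n m β a (b+1) t = phiK n m β (a+1) b t + t * phiK n m β a b t :=
      phiK_rec n m β a b t (by omega) hmn
    have key : |phiK n m β a (b+1) t - t^(b+1) * d0| ≤
        |phiK n m β (a+1) b t| + t * |phiK n m β a b t - t^b * d0| := by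
      have h1 : phiK n m β a (b+1) t - t^(b+1) * d0 =
          phiK n m β (a+1) b t + t * (phiK n m β a b t - t^b * d0) := by
        rw [hrec]; ring
      rw [h1]
      refine (abs_add_le _ _).trans ?_
      rw [abs_mul, abs_of_pos ht0]
    have habs1 : |phiK n m β (a+1) b t| ≤ |phiK n m β (a+1) b t - t^b * d1| + t^b * |d1| := by
      have h2 : phiK n m β (a+1) b t = (phiK n m β (a+1) b t - t^b * d1) + t^b * d1 := by ring
      calc |phiK n m β (a+1) b t|
          = |(phiK n m β (a+1) b t - t^b * d1) + t^b * d1| := by rw [← h2]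
        _ ≤ |phiK n m β (a+1) b t - t^b * d1| + |t^b * d1| := abs_add_le _ _
        _ = |phiK n m β (a+1) b t - t^b * d1| + t^b * |d1| := by
            rw [abs_mul, abs_of_nonneg (pow_nonneg ht0.le b)]
    have hple : t^b ≤ t^(b+1) := pow_le_pow_right₀ ht (Nat.le_succ b)
    calc t * |phiK n m β a (b+1) t - t^(b+1) * d0|
        ≤ t * (|phiK n m β (a+1) b t| + t * |phiK n m β a b t - t^b * d0|) :=
          mul_le_mul_of_nonneg_left key ht0.le
      _ = t * |phiK n m β (a+1) b t| + t * (t * |phiK n m β a b t - t^b * d0|) := by ring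
      _ ≤ t * (|phiK n m β (a+1) b t - t^b * d1| + t^b * |d1|) + t * (C₂ * t^b) :=
          add_le_add (mul_le_mul_of_nonneg_left habs1 ht0.le)
            (mul_le_mul_of_nonneg_left (hC₂ t ht) ht0.le)
      _ = (t * |phiK n m β (a+1) b t - t^b * d1|) + |d1| * (t^b * t) + C₂ * (t^b * t) := by
          ring
      _ = (t * |phiK n m β (a+1) b t - t^b * d1|) + |d1| * t^(b+1) + C₂ * t^(b+1) := by
          rw [← pow_succ]
      _ ≤ C₁ * t^b + |d1| * t^(b+1) + C₂ * t^(b+1) :=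
          add_le_add (add_le_add (hC₁ t ht) le_rfl) le_rfl
      _ ≤ C₁ * t^(b+1) + |d1| * t^(b+1) + C₂ * t^(b+1) :=
          add_le_add (add_le_add (mul_le_mul_of_nonneg_left hple hC₁0) le_rfl) le_rfl
      _ = (C₁ + |d1| + C₂) * t^(b+1) := by ring

theorem kiselman_stmt2 (n m : ℕ) (hm1 : 1 ≤ m) (hmn : m ≤ n)
    (β : Matrix (Fin (n+1)) (Fin (n+1)) ℂ) (hβ : β.IsHermitian)
    (h : ∀ α : Fin m → Matrix (Fin (n+1)) (Fin (n+1)) ℂ,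
      (∀ i, (α i).IsHermitian) → (∀ i, ThetaPos n m (α i)) →
      0 ≤ (mixedDet (fun i : Fin (n+1) =>
        if h0 : (i : ℕ) = 0 then β
        else if h1 : (i : ℕ) ≤ m then α ⟨(i : ℕ) - 1, by omega⟩
        else thetaMat n)).re) :
    ThetaPos n m β := by
  -- the constant `c`
  set c := phiK n m β 0 0 0 with hcdef
  have hc : 0 < c := by
    have hb := base_pos n m hm1 hmn
    have heq0 : phiK n m β 0 0 0 = (mixedDet (fun i : Fin (n+1) =>
        if (i : ℕ) < m + 1 then (1 : Matrix (Fin (n+1)) (Fin (n+1)) ℂ) else thetaMat n)).re := by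
      unfold phiK
      rw [arr_00]
    rw [hcdef, heq0]
    exact hb
  -- translation lemmas
  have T1 : ∀ (k : ℕ) (t : ℝ),
      (fun i : Fin (n+1) => if (i : ℕ) < k then β + (t:ℂ) • 1
        else if (i : ℕ) < m + 1 then (1 : Matrix (Fin (n+1)) (Fin (n+1)) ℂ) else thetaMat n)
      = arr n m β 0 k t := by
    intro k t
    funext i
    simp only [arr]
    split_ifs <;> first | rfl | omega
  have Tone : ∀ k : ℕ, k ≤ m + 1 →
      (fun i : Fin (n+1) => if (i : ℕ) < k then (1 : Matrix (Fin (n+1)) (Fin (n+1)) ℂ)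
        else if (i : ℕ) < m + 1 then (1 : Matrix (Fin (n+1)) (Fin (n+1)) ℂ) else thetaMat n)
      = (fun i : Fin (n+1) =>
          if (i : ℕ) < m + 1 then (1 : Matrix (Fin (n+1)) (Fin (n+1)) ℂ) else thetaMat n) := by
    intro k hk
    funext i
    split_ifs <;> first | rfl | omega
  -- uniform eventual positivity
  have existsM : ∀ K : ℕ, ∃ M : ℝ, 1 ≤ M ∧ ∀ t, M ≤ t → ∀ k, 1 ≤ k → k ≤ K → k ≤ m + 1 →
      0 < phiK n m β 0 k t := by
    intro K
    induction K with
    | zero => exact ⟨1, le_rfl, fun t _ k hk1 hk2 _ => by omega⟩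
    | succ K ihK =>
      obtain ⟨M₀, hM₀1, hM₀⟩ := ihK
      by_cases hK : K + 1 ≤ m + 1
      · obtain ⟨C, hC0, hC⟩ := phiK_grow n m β hmn (K+1) 0 (by omega)
        refine ⟨max M₀ (max 1 ((C+1)/c)), le_trans (le_max_left 1 _) (le_max_right M₀ _),
          fun t ht k hk1 hk2 hk3 => ?_⟩
        rcases Nat.lt_or_ge k (K+1) with hkK | hkK
        · exact hM₀ t (le_trans (le_max_left _ _) ht) k hk1 (by omega) hk3
        · have hkeq : k = K + 1 := by omega
          subst hkeq
          have h1t : (1:ℝ) ≤ t := le_trans (le_trans (le_max_left 1 _) (le_max_right M₀ _)) ht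
          have ht0 : (0:ℝ) < t := lt_of_lt_of_le one_pos h1t
          have hP : (0:ℝ) < t^(K+1) := pow_pos ht0 _
          have h4 := hC t h1t
          have e1 : t * (t^(K+1) * c - phiK n m β 0 (K+1) t) ≤
              t * |phiK n m β 0 (K+1) t - t^(K+1) * c| := by
            apply mul_le_mul_of_nonneg_left _ ht0.le
            rw [abs_sub_comm]
            exact le_abs_self _
          have e2 : t * (t^(K+1) * c - phiK n m β 0 (K+1) t) ≤ C * t^(K+1) := e1.trans h4
          have e3 : C + 1 ≤ t * c := by
            have : (C+1)/c ≤ t := le_trans (le_trans (le_max_right 1 _) (le_max_right M₀ _)) ht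
            rw [div_le_iff₀ hc] at this
            nlinarith
          nlinarith [mul_le_mul_of_nonneg_left e3 hP.le]
      · exact ⟨M₀, hM₀1, fun t ht k hk1 hk2 hk3 => hM₀ t ht k hk1 (by omega) hk3⟩
  -- the master claim
  have master : ∀ t : ℝ, 0 ≤ t → ∀ k, 1 ≤ k → k ≤ m + 1 → 0 ≤ phiK n m β 0 k t := by
    by_contra hcon
    push_neg at hcon
    obtain ⟨t0, ht00, k0, hk01, hk02, hk03⟩ := hcon
    set Bad : Set ℝ := {t | 0 ≤ t ∧ ∃ k, 1 ≤ k ∧ k ≤ m + 1 ∧ phiK n m β 0 k t < 0} with hBad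
    have ht0Bad : t0 ∈ Bad := ⟨ht00, k0, hk01, hk02, hk03⟩
    have hne : Bad.Nonempty := ⟨t0, ht0Bad⟩
    obtain ⟨M, hM1, hM⟩ := existsM (m+1)
    have hbdd : BddAbove Bad := by
      refine ⟨M, fun t htB => ?_⟩
      by_contra hMt
      push_neg at hMt
      obtain ⟨_, k, hk1, hk2, hneg⟩ := htB
      exact absurd (hM t hMt.le k hk1 hk2 hk2) (not_lt.mpr hneg.le)
    set u := sSup Bad with hu
    have hu0 : 0 ≤ u := le_trans ht00 (le_csSup hbdd ht0Bad)
    have hgood : ∀ t, u < t → ∀ k, 1 ≤ k → k ≤ m + 1 → 0 ≤ phiK n m β 0 k t := by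
      intro t hut k hk1 hk2
      by_contra hlt
      push_neg at hlt
      have htB : t ∈ Bad := ⟨le_trans hu0 hut.le, k, hk1, hk2, hlt⟩
      exact absurd (le_csSup hbdd htB) (not_le.mpr hut)
    have hchain : ∀ t, u < t → ∀ k, k ≤ m + 1 → t^k * c ≤ phiK n m β 0 k t := by
      intro t hut k
      induction k with
      | zero =>
        intro _
        have h0 : phiK n m β 0 0 t = c := by
          rw [hcdef]
          unfold phiK
          rw [arr_b0]
        rw [h0, pow_zero, one_mul]
      | succ k ihk =>
        intro hk1
        have ht0 : (0:ℝ) ≤ t := le_trans hu0 hut.le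
        have hrec : phiK n m β 0 (k+1) t = phiK n m β 1 k t + t * phiK n m β 0 k t :=
          phiK_rec n m β 0 k t (by omega) hmn
        have hmid : 0 ≤ phiK n m β 1 k t := by
          set α : Fin m → Matrix (Fin (n+1)) (Fin (n+1)) ℂ :=
            fun l => if (l : ℕ) < k then β + (t:ℂ) • 1 else 1 with hα
          have hsm : ((t:ℂ) • (1 : Matrix (Fin (n+1)) (Fin (n+1)) ℂ)).IsHermitian := by
            unfold Matrix.IsHermitian
            rw [Matrix.conjTranspose_smul, Matrix.conjTranspose_one, Complex.star_def,
              Complex.conj_ofReal]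
          have hherm : ∀ i, (α i).IsHermitian := by
            intro i
            simp only [hα]
            split_ifs
            · exact hβ.add hsm
            · exact Matrix.isHermitian_one
          have hpos : ∀ i, ThetaPos n m (α i) := by
            intro i
            simp only [hα]
            split_ifs
            · intro k' hk1' hk2'
              rw [T1 k' t]
              exact hgood t hut k' hk1' hk2'
            · intro k' hk1' hk2'
              rw [Tone k' hk2']
              exact (base_pos n m hm1 hmn).le
          have H := h α hherm hpos
          have heq : (fun i : Fin (n+1) =>
              if h0 : (i : ℕ) = 0 then β
              else if h1 : (i : ℕ) ≤ m then α ⟨(i : ℕ) - 1, by omega⟩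
              else thetaMat n) = arr n m β 1 k t := by
            funext i
            by_cases h0 : (i : ℕ) = 0
            · rw [dif_pos h0]
              simp only [arr]
              rw [if_pos (by omega : (i:ℕ) < 1)]
            · rw [dif_neg h0]
              by_cases h1 : (i : ℕ) ≤ m
              · rw [dif_pos h1]
                simp only [hα, arr]
                split_ifs <;> first | rfl | omega
              · rw [dif_neg h1]
                simp only [arr]
                split_ifs <;> first | rfl | omega
          rw [heq] at H
          exact H
        calc t^(k+1) * c = t * (t^k * c) := by ring
          _ ≤ t * phiK n m β 0 k t := mul_le_mul_of_nonneg_left (ihk (by omega)) ht0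
          _ ≤ phiK n m β 1 k t + t * phiK n m β 0 k t := le_add_of_nonneg_left hmid
          _ = phiK n m β 0 (k+1) t := hrec.symm
    have hlimit : ∀ k, k ≤ m + 1 → u^k * c ≤ phiK n m β 0 k u := by
      intro k hk
      have h1 : Filter.Tendsto (fun t => phiK n m β 0 k t) (nhdsWithin u (Set.Ioi u))
          (nhds (phiK n m β 0 k u)) :=
        ((phiK_cont n m β 0 k).tendsto u).mono_left nhdsWithin_le_nhds
      have h2 : Filter.Tendsto (fun t : ℝ => t^k * c) (nhdsWithin u (Set.Ioi u))
          (nhds (u^k * c)) :=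
        (((continuous_pow k).mul continuous_const).tendsto u).mono_left nhdsWithin_le_nhds
      refine le_of_tendsto_of_tendsto h2 h1 ?_
      filter_upwards [eventually_mem_nhdsWithin] with t ht
      exact hchain t ht k hk
    have huNotBad : u ∉ Bad := by
      rintro ⟨hu0', k, hk1, hk2, hneg⟩
      have h1 := hlimit k hk2
      have h2 : 0 ≤ u^k * c := mul_nonneg (pow_nonneg hu0 k) hc.le
      linarith
    rcases eq_or_lt_of_le hu0 with hueq | hupos
    · have ht0u : t0 ≤ u := le_csSup hbdd ht0Bad
      have : t0 = u := le_antisymm ht0u (hueq ▸ ht00)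
      exact huNotBad (this ▸ ht0Bad)
    · have hposk : ∀ k ∈ Finset.range (m+2), 0 < phiK n m β 0 k u := by
        intro k hk
        rw [Finset.mem_range] at hk
        have h1 := hlimit k (by omega)
        have h2 : 0 < u^k * c := mul_pos (pow_pos hupos k) hc
        linarith
      have hev : ∀ᶠ t in nhds u, ∀ k ∈ Finset.range (m+2), 0 < phiK n m β 0 k t := by
        rw [Filter.eventually_all_finset]
        intro k hk
        exact continuousAt_const.eventually_lt (phiK_cont n m β 0 k).continuousAt (hposk k hk)
      rw [Metric.eventually_nhds_iff] at hev
      obtain ⟨ε, hε, hball⟩ := hev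
      obtain ⟨t', ht'B, ht'gt⟩ := exists_lt_of_lt_csSup hne (by linarith : u - ε < u)
      have ht'le : t' ≤ u := le_csSup hbdd ht'B
      have hdist : dist t' u < ε := by
        rw [Real.dist_eq, abs_lt]
        constructor <;> linarith
      obtain ⟨_, k, hk1, hk2, hneg⟩ := ht'B
      exact absurd (hball hdist k (Finset.mem_range.mpr (by omega))) (not_lt.mpr hneg.le)
  -- conclude
  intro k hk1 hk2
  have hm0 := master 0 le_rfl k hk1 hk2
  have heq : (fun i : Fin (n+1) =>
      if (i : ℕ) < k then β
      else if (i : ℕ) < m + 1 then (1 : Matrix (Fin (n+1)) (Fin (n+1)) ℂ) else thetaMat n)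
      = arr n m β 0 k 0 := by
    funext i
    simp only [arr]
    split_ifs <;> first | rfl | omega | (push_cast; simp)
  rw [heq]
  exact hm0

end
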